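/- arXiv:2605.11510 — 2 statements merged into one kernel-verified Lean document; each statement's English description precedes it below -/
import Mathlib

section
/- Main theorem (classical Hagiwara decoding): Let c be a classical Hagiwara codeword based on a t-erasure-correcting code, and let y be obtained from c by t_d deletions and t_i insertions with t_d, t_i ≥ 1 and t_d + t_i ≤ t. Let P_e be the set of block indices that Algorithm 1 marks as erased and P_s the set of block indices b not marked as erased such that the extracted block y_{[β_b + l_b + 1, β_b + l_b + E]} differs from c_b. Then |P_e| + 2|P_s| ≤ t, and for every block b ∉ P_e ∪ P_s the algorithm outputs the correct block c_b. -/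
/-- Deletion at a 1-indexed position set `J`. -/
def del {α : Type*} (x : List α) (J : Finset ℕ) : List α :=
  (((x.zipIdx 1).map Prod.swap).filter (fun p => decide (p.1 ∉ J))).map Prod.snd

/-- The marker `0^t 1^t`. -/
def marker (t : ℕ) : List Bool :=
  List.replicate t false ++ List.replicate t true

/-- Hagiwara encoding: append the marker after each block and concatenate. -/
def hag (t : ℕ) (blocks : List (List Bool)) : List Bool :=
  (blocks.map (fun cb => cb ++ marker t)).flatten

/-- The pattern `0^{τd+l} 1^{τi−l}`. -/
def pat (τd τi : ℕ) (l : ℤ) : List Bool :=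
  List.replicate ((τd : ℤ) + l).toNat false ++
    List.replicate ((τi : ℤ) - l).toNat true

/-- The window `y_b` of `y` around the `b`-th marker (1-indexed block `b`):
the symbols at positions `γ_b − τd + 1, ..., γ_b + τi` where
`γ_b = (E+2t)(b−1) + E + t`. -/
def window (E t τd τi : ℕ) (y : List Bool) (b : ℕ) : List Bool :=
  (y.drop ((E + 2 * t) * (b - 1) + E + t - τd)).take (τd + τi)

/-- One step of Algorithm 1 on the pair of counters `(u, v)`. -/
def stepUV (E t τd τi : ℕ) (y : List Bool) (b : ℕ) (s : ℕ × ℕ) : ℕ × ℕ :=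
  let l : ℤ := (s.2 : ℤ) - (s.1 : ℤ)
  let w := window E t τd τi y b
  if w = pat τd τi l then s
  else
    match (List.range (τd + τi + 1)).find?
        (fun n : ℕ => n != 0 && (w == pat τd τi (l - (n : ℤ)))) with
    | some n => ((s.1 + n : ℕ), s.2)
    | none => (s.1, s.2 + 1)

/-- The counters `(u_b, v_b)` of Algorithm 1 after processing blocks `1, ..., b`. -/
def uv (E t τd τi : ℕ) (y : List Bool) : ℕ → ℕ × ℕ
  | 0 => (0, 0)
  | b + 1 => stepUV E t τd τi y (b + 1) (uv E t τd τi y b)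

/-- The block extracted by Algorithm 1 for block `b` (Line 6):
the symbols of `y` at positions `β_b + l_b + 1, ..., β_b + l_b + E`. -/
def extractBlock (E t τd τi : ℕ) (y : List Bool) (b : ℕ) : List Bool :=
  (y.drop ((((E + 2 * t) * (b - 1) : ℕ) : ℤ) +
      (((uv E t τd τi y b).2 : ℤ) - ((uv E t τd τi y b).1 : ℤ))).toNat).take E

/-- The `b`-th block of the codeword `c`. -/
def cBlock (E t : ℕ) (c : List Bool) (b : ℕ) : List Bool :=
  (c.drop ((E + 2 * t) * (b - 1))).take E


namespace HG


/-- number of members of `S` among 1-indexed positions `1..q`. -/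
def ct (S : Finset ℕ) (q : ℕ) : ℕ := (List.range' 1 q).countP (fun p => decide (p ∈ S))
/-- number of non-members of `S` among 1-indexed positions `1..q`. -/
def rk (S : Finset ℕ) (q : ℕ) : ℕ := (List.range' 1 q).countP (fun p => decide (p ∉ S))

lemma range'_one_concat (q : ℕ) : List.range' 1 (q+1) = List.range' 1 q ++ [q+1] := by
  simpa [Nat.add_comm] using List.range'_concat (step := 1) (s := 1) (n := q)

lemma ct_succ (S : Finset ℕ) (q : ℕ) :
    ct S (q+1) = ct S q + (if q+1 ∈ S then 1 else 0) := by
  simp only [ct, range'_one_concat, List.countP_append, List.countP_cons, List.countP_nil]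
  by_cases h : q+1 ∈ S <;> simp [h]

lemma rk_succ (S : Finset ℕ) (q : ℕ) :
    rk S (q+1) = rk S q + (if q+1 ∈ S then 0 else 1) := by
  simp only [rk, range'_one_concat, List.countP_append, List.countP_cons, List.countP_nil]
  by_cases h : q+1 ∈ S <;> simp [h]

lemma rk_add_ct (S : Finset ℕ) (q : ℕ) : rk S q + ct S q = q := by
  induction q with
  | zero => simp [rk, ct]
  | succ n ih =>
    rw [ct_succ, rk_succ]
    by_cases h : n+1 ∈ S <;> simp [h] <;> omega

lemma ct_split (S : Finset ℕ) {a b : ℕ} (h : a ≤ b) :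
    ct S b = ct S a + (List.range' (a+1) (b-a)).countP (fun p => decide (p ∈ S)) := by
  have e : List.range' 1 a ++ List.range' (1 + a) (b - a) = List.range' 1 ((b-a) + a) :=
    by simpa [Nat.add_comm] using List.range'_append (s := 1) (m := a) (n := b-a) (step := 1)
  have : List.range' 1 b = List.range' 1 a ++ List.range' (a+1) (b-a) := by
    rw [show a + 1 = 1 + a by omega, e, show b - a + a = b by omega]
  rw [ct, this, List.countP_append]; rfl

lemma rk_split (S : Finset ℕ) {a b : ℕ} (h : a ≤ b) :
    rk S b = rk S a + (List.range' (a+1) (b-a)).countP (fun p => decide (p ∉ S)) := by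
  have e : List.range' 1 a ++ List.range' (1 + a) (b - a) = List.range' 1 ((b-a) + a) :=
    by simpa [Nat.add_comm] using List.range'_append (s := 1) (m := a) (n := b-a) (step := 1)
  have : List.range' 1 b = List.range' 1 a ++ List.range' (a+1) (b-a) := by
    rw [show a + 1 = 1 + a by omega, e, show b - a + a = b by omega]
  rw [rk, this, List.countP_append]; rfl

lemma ct_mono (S : Finset ℕ) {a b : ℕ} (h : a ≤ b) : ct S a ≤ ct S b := by
  rw [ct_split S h]; omega

lemma rk_mono (S : Finset ℕ) {a b : ℕ} (h : a ≤ b) : rk S a ≤ rk S b := by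
  rw [rk_split S h]; omega

lemma countP_interval_le (S : Finset ℕ) (a n : ℕ) :
    (List.range' a n).countP (fun p => decide (p ∈ S)) ≤ n := by
  simpa using List.countP_le_length (l := List.range' a n) (p := fun p => decide (p ∈ S))

lemma ct_le_card (S : Finset ℕ) (q : ℕ) : ct S q ≤ S.card := by
  classical
  rw [ct, List.countP_eq_length_filter]
  have hnd : (List.filter (fun p => decide (p ∈ S)) (List.range' 1 q)).Nodup :=
    (List.nodup_range' (s := 1) (n := q)).filter _
  have hsub : ((List.range' 1 q).filter (fun p => decide (p ∈ S))).toFinset ⊆ S := by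
    intro x hx
    simp only [List.mem_toFinset, List.mem_filter, decide_eq_true_eq] at hx
    exact hx.2
  calc ((List.range' 1 q).filter (fun p => decide (p ∈ S))).length
      = ((List.range' 1 q).filter (fun p => decide (p ∈ S))).toFinset.card :=
        (List.toFinset_card_of_nodup hnd).symm
    _ ≤ S.card := Finset.card_le_card hsub

/-- positions strictly between `a` and `b` that are not in `S`, when `ct` counts agree,
are all absent from S. -/
lemma not_mem_of_ct_eq (S : Finset ℕ) {a b : ℕ} (hab : a ≤ b) (h : ct S b = ct S a)
    {p : ℕ} (h1 : a < p) (h2 : p ≤ b) : p ∉ S := by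
  intro hp
  have e1 : ct S a ≤ ct S (p-1) := ct_mono S (by omega)
  have e2 : ct S p ≤ ct S b := ct_mono S (by omega)
  have e3 : ct S p = ct S (p-1) + 1 := by
    have := ct_succ S (p-1)
    rw [show p - 1 + 1 = p by omega] at this
    simp [hp] at this
    omega
  omega

/-- key order lemma : for a surviving position `b` (i.e. `b ∉ S`, `1 ≤ b`),
`b ≤ a ↔ rk S b ≤ rk S a`. -/
lemma le_iff_rk_le (S : Finset ℕ) {b : ℕ} (hb1 : 1 ≤ b) (hbS : b ∉ S) (a : ℕ) :
    b ≤ a ↔ rk S b ≤ rk S a := by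
  constructor
  · exact fun h => rk_mono S h
  · intro h
    by_contra hc
    push_neg at hc
    have e : rk S b = rk S (b-1) + 1 := by
      have := rk_succ S (b-1)
      rw [show b - 1 + 1 = b by omega] at this
      simp [hbS] at this
      omega
    have : rk S a ≤ rk S (b-1) := rk_mono S (by omega)
    omega

/-- existence of the `(k+1)`-th surviving position. -/
lemma exists_rk_eq (S : Finset ℕ) {len k : ℕ} (h : k < rk S len) :
    ∃ q < len, (q+1) ∉ S ∧ rk S q = k := by
  have hex : ∃ n, k < rk S (n+1) := ⟨len - 1, by
    have : rk S len ≤ rk S (len - 1 + 1) := rk_mono S (by omega)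
    omega⟩
  classical
  let q := Nat.find hex
  have hq : k < rk S (q+1) := Nat.find_spec hex
  have hqmin : ∀ m < q, ¬ k < rk S (m+1) := fun m hm => Nat.find_min hex hm
  have h1 : rk S q ≤ k := by
    rcases Nat.eq_zero_or_pos q with h0 | h0
    · simp [h0, rk]
    · have := hqmin (q-1) (by omega)
      have e : q - 1 + 1 = q := by omega
      rw [e] at this
      omega
  have h2 : rk S (q+1) ≤ rk S q + 1 := by
    have := rk_succ S q
    by_cases hm : q+1 ∈ S <;> simp [hm] at this <;> omega
  have hqS : (q+1) ∉ S := by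
    intro hm
    have := rk_succ S q
    simp [hm] at this
    omega
  have hrk : rk S q = k := by omega
  have hqlen : q < len := by
    by_contra hc
    have : rk S len ≤ rk S q := rk_mono S (by omega)
    omega
  exact ⟨q, hqlen, hqS, hrk⟩



/-- count of survivors among positions `m, m+1, ..., m+q-1`. -/
def rkf (S : Finset ℕ) (m q : ℕ) : ℕ := (List.range' m q).countP (fun p => decide (p ∉ S))

lemma rkf_one (S : Finset ℕ) (q : ℕ) : rkf S 1 q = rk S q := rfl

lemma rkf_succ (S : Finset ℕ) (m q : ℕ) :
    rkf S m (q+1) = (if m ∈ S then 0 else 1) + rkf S (m+1) q := by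
  rw [rkf, List.range'_succ, List.countP_cons]
  by_cases h : m ∈ S <;> simp [h, rkf] <;> omega

def delA {α : Type*} (m : ℕ) (x : List α) (S : Finset ℕ) : List α :=
  (((x.zipIdx m).map Prod.swap).filter (fun p => decide (p.1 ∉ S))).map Prod.snd

lemma delA_one {α : Type*} (x : List α) (S : Finset ℕ) : delA 1 x S = del x S := rfl

lemma delA_cons {α : Type*} (m : ℕ) (a : α) (x : List α) (S : Finset ℕ) :
    delA m (a :: x) S = if m ∈ S then delA (m+1) x S else a :: delA (m+1) x S := by
  by_cases h : m ∈ S <;> simp [delA, List.zipIdx_cons, List.filter_cons, h]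

lemma delA_length {α : Type*} (S : Finset ℕ) :
    ∀ (x : List α) (m : ℕ), (delA m x S).length = rkf S m x.length := by
  intro x
  induction x with
  | nil => intro m; simp [delA, rkf]
  | cons a x ih =>
    intro m
    rw [delA_cons, List.length_cons, rkf_succ]
    by_cases h : m ∈ S <;> simp [h, ih] <;> omega

lemma delA_get {α : Type*} (S : Finset ℕ) :
    ∀ (x : List α) (m q : ℕ), q < x.length → (m+q) ∉ S →
      (delA m x S)[rkf S m q]? = x[q]? := by
  intro x
  induction x with
  | nil => intro m q h; simp at h
  | cons a x ih =>
    intro m q hq hS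
    rw [delA_cons]
    cases q with
    | zero =>
      simp only [Nat.add_zero] at hS
      simp [hS, rkf]
    | succ q =>
      have hx : q < x.length := by simpa using hq
      have hS' : (m+1) + q ∉ S := by
        rw [show m+1+q = m+(q+1) by omega]; exact hS
      rw [rkf_succ]
      by_cases h : m ∈ S
      · simpa [h] using ih (m+1) q hx hS'
      · simp only [h, if_false]
        have := ih (m+1) q hx hS'
        rw [show 1 + rkf S (m+1) q = rkf S (m+1) q + 1 by omega]
        simpa using this

lemma del_length {α : Type*} (x : List α) (S : Finset ℕ) :
    (del x S).length = rk S x.length := by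
  rw [← delA_one, delA_length, rkf_one]

lemma del_get {α : Type*} (x : List α) (S : Finset ℕ) {q : ℕ} (hq : q < x.length)
    (hS : (q+1) ∉ S) : (del x S)[rk S q]? = x[q]? := by
  rw [← delA_one, ← rkf_one]
  exact delA_get S x 1 q hq (by simpa [Nat.add_comm] using hS)



lemma hag_nil (t : ℕ) : hag t [] = [] := rfl

lemma hag_cons (t : ℕ) (cb : List Bool) (bl : List (List Bool)) :
    hag t (cb :: bl) = (cb ++ marker t) ++ hag t bl := by
  simp [hag]

lemma hag_length (t E : ℕ) : ∀ (bl : List (List Bool)), (∀ cb ∈ bl, cb.length = E) →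
    (hag t bl).length = bl.length * (E + 2*t) := by
  intro bl
  induction bl with
  | nil => simp [hag_nil]
  | cons cb bl ih =>
    intro h
    rw [hag_cons, List.length_append, List.length_append, ih (fun x hx => h x (by simp [hx]))]
    have : cb.length = E := h cb (by simp)
    simp [marker, this]
    ring

lemma hag_val (t E : ℕ) : ∀ (bl : List (List Bool)), (∀ cb ∈ bl, cb.length = E) →
    ∀ i s, i < bl.length → E ≤ s → s < E + 2*t →
    (hag t bl)[(E+2*t)*i + s]? = some (decide (E+t ≤ s)) := by
  intro bl
  induction bl with
  | nil => intro h i s hi; simp at hi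
  | cons cb bl ih =>
    intro h i s hi hs1 hs2
    have hcb : cb.length = E := h cb (by simp)
    rw [hag_cons]
    cases i with
    | zero =>
      rw [Nat.mul_zero, Nat.zero_add]
      rw [List.getElem?_append_left (by simp [hcb, marker]; omega)]
      rw [List.getElem?_append_right (by simp [hcb]; omega)]
      simp only [marker, hcb]
      by_cases h3 : E + t ≤ s
      · rw [List.getElem?_append_right (by simp; omega)]
        rw [List.getElem?_replicate]
        simp only [List.length_replicate]
        rw [if_pos (by omega)]
        simp [h3]
      · rw [List.getElem?_append_left (by simp; omega)]
        rw [List.getElem?_replicate, if_pos (by omega)]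
        simp [h3]
    | succ i =>
      rw [List.getElem?_append_right (by simp [hcb, marker]; push_cast; ring_nf; omega)]
      have e : (E+2*t)*(i+1) + s - (cb ++ marker t).length = (E+2*t)*i + s := by
        simp [hcb, marker]; ring_nf; omega
      rw [e, ih (fun x hx => h x (by simp [hx])) i s (by simpa using hi) hs1 hs2]

lemma getElem?_eq_getD {α : Type*} (L : List α) (j : ℕ) (d : α) (h : j < L.length) :
    L[j]? = some (L.getD j d) := by
  rw [List.getD_eq_getElem L d h, List.getElem?_eq_getElem h]

lemma drop_take_length {α : Type*} (L : List α) (s n : ℕ) (h : s + n ≤ L.length) :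
    ((L.drop s).take n).length = n := by
  simp; omega

lemma drop_take_getElem? {α : Type*} (L : List α) (s n j : ℕ) :
    ((L.drop s).take n)[j]? = if j < n then L[s+j]? else none := by
  rw [List.getElem?_take]
  by_cases h : j < n <;> simp [h, List.getElem?_drop]

lemma count_drop_take (L : List Bool) (d : Bool) :
    ∀ (n s : ℕ), s + n ≤ L.length → (a : Bool) →
    ((L.drop s).take n).count a = (List.range' s n).countP (fun j => L.getD j d == a) := by
  intro n
  induction n with
  | zero => simp
  | succ n ih =>
    intro s h a
    have h1 : s + n < L.length := by omega
    have e1 : (L.drop s).take (n+1) = (L.drop s).take n ++ [L.getD (s+n) d] := by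
      rw [List.take_succ]
      congr 1
      rw [List.getElem?_drop, getElem?_eq_getD L (s+n) d h1]
      rfl
    rw [e1, List.count_append, List.range'_concat, List.countP_append, ih s (by omega) a]
    simp [List.count_cons, List.countP_cons, List.getD_eq_getElem?_getD, beq_iff_eq]

lemma pat_length {τd τi : ℕ} {l : ℤ} (h1 : -(τd:ℤ) ≤ l) (h2 : l ≤ τi) :
    (pat τd τi l).length = τd + τi := by
  simp [pat]; omega

lemma pat_bounds {τd τi : ℕ} {l : ℤ} (w : List Bool) (hw : w.length = τd + τi)
    (he : w = pat τd τi l) : -(τd:ℤ) ≤ l ∧ l ≤ τi := by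
  have : (pat τd τi l).length = τd + τi := by rw [← he, hw]
  simp [pat] at this
  omega

lemma pat_count_false (τd τi : ℕ) (l : ℤ) :
    (pat τd τi l).count false = ((τd:ℤ) + l).toNat := by
  simp [pat, List.count_append, List.count_replicate]

lemma pat_getElem? (τd τi : ℕ) (l : ℤ) (j : ℕ) :
    (pat τd τi l)[j]? = if j < ((τd:ℤ)+l).toNat then some false
      else if j < ((τd:ℤ)+l).toNat + ((τi:ℤ)-l).toNat then some true else none := by
  rw [pat, List.getElem?_append]
  simp only [List.length_replicate, List.getElem?_replicate]
  by_cases h : j < ((τd:ℤ)+l).toNat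
  · simp [h]
  · simp only [h, if_neg h, if_false]
    simp [show j - ((τd:ℤ)+l).toNat < ((τi:ℤ)-l).toNat ↔
      j < ((τd:ℤ)+l).toNat + ((τi:ℤ)-l).toNat by omega]


end HG
namespace HG

/-- All the setup data and hypotheses for the analysis. -/
structure St where
  (N E t td ti τd τi : ℕ)
  (c y : List Bool)
  (J K : Finset ℕ)
  (htd : 1 ≤ td)
  (hti : 1 ≤ ti)
  (htdi : td + ti ≤ t)
  (ht1 : td ≤ τd)
  (ht2 : ti ≤ τi)
  (ht3 : τd + ti ≤ t)
  (ht4 : τi + td ≤ t)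
  (hJc : J.card = td)
  (hKc : K.card = ti)
  (hzeq : del y K = del c J)
  (hMlen : c.length = N * (E + 2*t))
  (hmark : ∀ b, 1 ≤ b → b ≤ N → ∀ p, (E+2*t)*(b-1)+E ≤ p → p < (E+2*t)*b →
      getElem? c p = some (decide ((E+2*t)*(b-1)+E+t ≤ p)))

namespace St

variable (S : St)

/-- common length of `del y K = del c J`, counted from both sides. -/
lemma rk_len_eq : rk S.K S.y.length = rk S.J S.c.length := by
  rw [← del_length S.y S.K, ← del_length S.c S.J, S.hzeq]

/-- the 1-indexed position of the `(k+1)`-th surviving symbol of `y`. -/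
noncomputable def sig (k : ℕ) : ℕ :=
  if h : ∃ q, q < S.y.length ∧ (q+1) ∉ S.K ∧ rk S.K q = k then h.choose + 1 else 0

lemma sig_spec {k : ℕ} (hk : k < rk S.K S.y.length) :
    S.sig k ≤ S.y.length ∧ 1 ≤ S.sig k ∧ S.sig k ∉ S.K ∧ rk S.K (S.sig k) = k + 1 := by
  have hex : ∃ q, q < S.y.length ∧ (q+1) ∉ S.K ∧ rk S.K q = k := by
    obtain ⟨q, h1, h2, h3⟩ := exists_rk_eq S.K hk
    exact ⟨q, h1, h2, h3⟩
  rw [sig, dif_pos hex]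
  obtain ⟨h1, h2, h3⟩ := hex.choose_spec
  refine ⟨by omega, by omega, h2, ?_⟩
  rw [rk_succ, h3, if_neg h2]

/-- the boundary in `y` corresponding to boundary after position `P` in `c`. -/
noncomputable def mm (P : ℕ) : ℕ :=
  if rk S.J P = 0 then 0 else S.sig (rk S.J P - 1)

lemma mm_spec {P : ℕ} (hP : P ≤ S.c.length) :
    rk S.K (S.mm P) = rk S.J P ∧ S.mm P ≤ S.y.length ∧
      (S.mm P = 0 ∨ S.mm P ∉ S.K) := by
  by_cases h : rk S.J P = 0
  · rw [mm, if_pos h]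
    refine ⟨?_, by omega, Or.inl rfl⟩
    rw [h]; simp [rk]
  · rw [mm, if_neg h]
    have hk : rk S.J P - 1 < rk S.K S.y.length := by
      rw [rk_len_eq]
      have := rk_mono S.J hP
      omega
    obtain ⟨h1, h2, h3, h4⟩ := S.sig_spec hk
    exact ⟨by omega, h1, Or.inr h3⟩

lemma mm_rk {P : ℕ} (hP : P ≤ S.c.length) : rk S.K (S.mm P) = rk S.J P :=
  (S.mm_spec hP).1

lemma mm_le {P : ℕ} (hP : P ≤ S.c.length) : S.mm P ≤ S.y.length :=
  (S.mm_spec hP).2.1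

/-- `mm P = rk J P + ct K (mm P)`. -/
lemma mm_eq {P : ℕ} (hP : P ≤ S.c.length) :
    S.mm P = rk S.J P + ct S.K (S.mm P) := by
  have h1 := S.mm_rk hP
  have h2 := rk_add_ct S.K (S.mm P)
  omega

lemma mm_mono {P P' : ℕ} (h : P ≤ P') (hP' : P' ≤ S.c.length) :
    S.mm P ≤ S.mm P' := by
  have hP : P ≤ S.c.length := le_trans h hP'
  rcases (S.mm_spec hP).2.2 with h0 | hK
  · omega
  · have h1 : rk S.K (S.mm P) ≤ rk S.K (S.mm P') := by
      rw [S.mm_rk hP, S.mm_rk hP']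
      exact rk_mono S.J h
    by_cases hz : S.mm P = 0
    · omega
    · exact (le_iff_rk_le S.K (by omega) hK (S.mm P')).2 h1

/-- transport: a surviving symbol of `y` equals the corresponding symbol of `c`. -/
lemma trans {j : ℕ} (hj : j < S.y.length) (hjK : (j+1) ∉ S.K) :
    ∃ p, p < S.c.length ∧ (p+1) ∉ S.J ∧ rk S.J (p+1) = rk S.K (j+1) ∧
      S.y[j]? = S.c[p]? := by
  have hk : rk S.K j < rk S.J S.c.length := by
    rw [← S.rk_len_eq]
    have h1 : rk S.K (j+1) = rk S.K j + 1 := by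
      rw [rk_succ, if_neg hjK]
    have := rk_mono S.K (show j+1 ≤ S.y.length by omega)
    omega
  obtain ⟨p, hp, hpJ, hpr⟩ := exists_rk_eq S.J hk
  have h1 : (del S.c S.J)[rk S.J p]? = S.c[p]? := del_get S.c S.J hp hpJ
  have h2 : (del S.y S.K)[rk S.K j]? = S.y[j]? := del_get S.y S.K hj hjK
  have h3 : rk S.J (p+1) = rk S.K (j+1) := by
    rw [rk_succ, rk_succ, if_neg hpJ, if_neg hjK, hpr]
  refine ⟨p, hp, hpJ, h3, ?_⟩
  rw [h2.symm, S.hzeq, ← hpr, h1]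

lemma ctJ_le (q : ℕ) : ct S.J q ≤ S.td := S.hJc ▸ ct_le_card S.J q
lemma ctK_le (q : ℕ) : ct S.K q ≤ S.ti := S.hKc ▸ ct_le_card S.K q

end St
end HG
namespace HG
lemma rkct (T : Finset ℕ) (q : ℕ) : rk T q = q - ct T q ∧ ct T q ≤ q := by
  have := rk_add_ct T q
  omega

namespace St

variable (S : St)

/-- 1-indexed position of the last `0` of the `b`-th marker. -/
def gb (b : ℕ) : ℕ := (S.E+2*S.t)*(b-1) + S.E + S.t

lemma pdiff {b : ℕ} (hb1 : 1 ≤ b) : (S.E+2*S.t)*b = S.gb b + S.t := by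
  have h : (S.E+2*S.t)*b = (S.E+2*S.t)*(b-1) + (S.E+2*S.t) := by
    rw [← Nat.mul_succ]
    congr 1
    omega
  rw [gb]
  omega

lemma chain {b : ℕ} (hb1 : 1 ≤ b) (hbN : b ≤ S.N) :
    (S.E+2*S.t)*b ≤ S.c.length ∧
    S.mm ((S.E+2*S.t)*(b-1)) + S.E + S.τd ≤ S.gb b ∧
    S.gb b ≤ S.mm (S.gb b) + S.τd ∧
    S.mm (S.gb b) ≤ S.gb b + S.τi ∧
    S.gb b + S.τi ≤ S.mm ((S.E+2*S.t)*b) ∧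
    S.mm ((S.E+2*S.t)*b) ≤ S.y.length := by
  have hP1 : (S.E+2*S.t)*b ≤ S.c.length := by
    rw [S.hMlen, Nat.mul_comm (S.E+2*S.t) b]
    exact Nat.mul_le_mul_right _ hbN
  have hgam : S.gb b ≤ (S.E+2*S.t)*b := by rw [S.pdiff hb1]; omega
  have hP0 : (S.E+2*S.t)*(b-1) ≤ S.gb b := by rw [gb]; omega
  have e0 := S.mm_eq (le_trans (le_trans hP0 hgam) hP1)
  have eg := S.mm_eq (le_trans hgam hP1)
  have e1 := S.mm_eq hP1
  have r0 := rkct S.J ((S.E+2*S.t)*(b-1))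
  have rg := rkct S.J (S.gb b)
  have r1 := rkct S.J ((S.E+2*S.t)*b)
  have cJ0 := S.ctJ_le ((S.E+2*S.t)*(b-1))
  have cJg := S.ctJ_le (S.gb b)
  have cJ1 := S.ctJ_le ((S.E+2*S.t)*b)
  have cK0 := S.ctK_le (S.mm ((S.E+2*S.t)*(b-1)))
  have cKg := S.ctK_le (S.mm (S.gb b))
  have cK1 := S.ctK_le (S.mm ((S.E+2*S.t)*b))
  have hJ01 : ct S.J ((S.E+2*S.t)*(b-1)) ≤ ct S.J (S.gb b) := ct_mono _ hP0
  have hJg1 : ct S.J (S.gb b) ≤ ct S.J ((S.E+2*S.t)*b) := ct_mono _ hgam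
  have hml := S.mm_le hP1
  have hpd := S.pdiff hb1
  have h1t := S.ht1
  have h2 := S.ht2
  have h3 := S.ht3
  have h4 := S.ht4
  have h5 := S.htdi
  have hgbE : S.gb b = (S.E+2*S.t)*(b-1) + S.E + S.t := rfl
  refine ⟨hP1, ?_, ?_, ?_, ?_, hml⟩ <;> omega

lemma purity {b : ℕ} (hb1 : 1 ≤ b) (hbN : b ≤ S.N) {j : ℕ}
    (h1 : S.gb b ≤ j + S.τd) (h2 : j < S.gb b + S.τi) (hjK : (j+1) ∉ S.K) :
    S.y[j]? = some (decide (S.mm (S.gb b) ≤ j)) := by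
  obtain ⟨hP1, c2, c3, c4, c5, c6⟩ := S.chain hb1 hbN
  have hj : j < S.y.length := by omega
  obtain ⟨p, hp, hpJ, hpr, hval⟩ := S.trans hj hjK
  have rkp := rkct S.J (p+1)
  have rkj := rkct S.K (j+1)
  have cJp := S.ctJ_le (p+1)
  have cKj := S.ctK_le (j+1)
  have hgam : S.gb b ≤ (S.E+2*S.t)*b := by rw [S.pdiff hb1]; omega
  have hpd := S.pdiff hb1
  have h3 := S.ht3
  have h4 := S.ht4
  have hgbE : S.gb b = (S.E+2*S.t)*(b-1) + S.E + S.t := rfl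
  -- position bounds for p
  have hpl : (S.E+2*S.t)*(b-1) + S.E ≤ p := by omega
  have hpu : p < (S.E+2*S.t)*b := by omega
  have hcp := S.hmark b hb1 hbN p hpl hpu
  -- the order equivalence
  have hgJ : rk S.J (p+1) = rk S.K (j+1) := hpr
  have hiff : (S.mm (S.gb b) ≤ j) ↔ ((S.E+2*S.t)*(b-1)+S.E+S.t ≤ p) := by
    have hKiff := le_iff_rk_le S.K (by omega) hjK (S.mm (S.gb b))
    have hJiff := le_iff_rk_le S.J (by omega) hpJ (S.gb b)
    have hmr := S.mm_rk (le_trans hgam hP1)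
    constructor
    · intro h
      by_contra hc
      have : p + 1 ≤ S.gb b := by omega
      have := hJiff.1 this
      rw [hgJ, ← hmr] at this
      have := hKiff.2 this
      omega
    · intro h
      by_contra hc
      have : j + 1 ≤ S.mm (S.gb b) := by omega
      have := hKiff.1 this
      rw [hmr, ← hgJ] at this
      have := hJiff.2 this
      omega
  rw [hval, hcp]
  congr 1
  by_cases hd : S.mm (S.gb b) ≤ j
  · simp [hd, hiff.1 hd]
  · have : ¬ ((S.E+2*S.t)*(b-1)+S.E+S.t ≤ p) := fun hh => hd (hiff.2 hh)
    simp [hd, this]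

end St
end HG
namespace HG

lemma countP_and_split {α : Type*} (l : List α) (p q : α → Bool) :
    l.countP p = l.countP (fun a => p a && q a) + l.countP (fun a => p a && !q a) := by
  induction l with
  | nil => simp
  | cons a l ih =>
    simp only [List.countP_cons, ih]
    by_cases h1 : p a = true <;> by_cases h2 : q a = true <;> simp [h1, h2] <;> omega

lemma countP_not_split {α : Type*} (l : List α) (q : α → Bool) :
    l.countP q + l.countP (fun a => !q a) = l.length := by
  have := countP_and_split l (fun _ => true) q
  simpa using this.symm

lemma countP_shift (f : ℕ → Bool) (s n : ℕ) :
    (List.range' s n).countP (fun j => f (j+1)) = (List.range' (s+1) n).countP f := by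
  have h := List.map_add_range' (a := 1) s n 1
  rw [show 1 + s = s + 1 by omega] at h
  rw [← h, List.countP_map]
  apply List.countP_congr
  intro x _
  simp [Function.comp, Nat.add_comm]

lemma interval_ct (T : Finset ℕ) {a b : ℕ} (h : a ≤ b) :
    (List.range' a (b-a)).countP (fun j => decide ((j+1) ∈ T)) + ct T a = ct T b := by
  have h1 := ct_split T h
  have h2 := countP_shift (fun p => decide (p ∈ T)) a (b-a)
  omega

namespace St

variable (S : St)

lemma win_eq (b : ℕ) : window S.E S.t S.τd S.τi S.y b
    = (S.y.drop (S.gb b - S.τd)).take (S.τd + S.τi) := rfl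

lemma gb_ge (b : ℕ) : S.τd + S.ti ≤ S.gb b := by
  have := S.ht3
  have : S.τd + S.ti ≤ S.E + S.t := by
    have := S.ht3; have := S.hti; omega
  rw [gb]; omega

lemma win_len {b : ℕ} (hb1 : 1 ≤ b) (hbN : b ≤ S.N) :
    (window S.E S.t S.τd S.τi S.y b).length = S.τd + S.τi := by
  obtain ⟨hP1, c2, c3, c4, c5, c6⟩ := S.chain hb1 hbN
  have hgb := S.gb_ge b
  have := S.hti
  rw [win_eq]
  apply drop_take_length
  omega

lemma win_get {b : ℕ} (j : ℕ) :
    (window S.E S.t S.τd S.τi S.y b)[j]? =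
      if j < S.τd + S.τi then S.y[(S.gb b - S.τd) + j]? else none := by
  rw [win_eq, drop_take_getElem?]

/-- Sub-lemma 1a : if no insertions in the segment's range, the window is an exact
pattern at the true window offset. -/
lemma window_pure {b : ℕ} (hb1 : 1 ≤ b) (hbN : b ≤ S.N)
    (hno : ct S.K (S.mm ((S.E+2*S.t)*b)) = ct S.K (S.mm ((S.E+2*S.t)*(b-1)))) :
    window S.E S.t S.τd S.τi S.y b = pat S.τd S.τi ((S.mm (S.gb b) : ℤ) - S.gb b) := by
  obtain ⟨hP1, c2, c3, c4, c5, c6⟩ := S.chain hb1 hbN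
  have hgb := S.gb_ge b
  have hti := S.hti
  have hmono : S.mm ((S.E+2*S.t)*(b-1)) ≤ S.mm ((S.E+2*S.t)*b) := by omega
  set lam : ℤ := (S.mm (S.gb b) : ℤ) - S.gb b with hlam
  have htn1 : ((S.τd : ℤ) + lam).toNat = S.mm (S.gb b) - (S.gb b - S.τd) := by omega
  have htn2 : ((S.τd : ℤ) + lam).toNat + ((S.τi : ℤ) - lam).toNat = S.τd + S.τi := by omega
  apply List.ext_getElem?
  intro n
  rw [win_get, pat_getElem?]
  by_cases hn : n < S.τd + S.τi
  · rw [if_pos hn]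
    set j := (S.gb b - S.τd) + n with hj
    have hjK : (j+1) ∉ S.K :=
      not_mem_of_ct_eq S.K hmono hno (p := j+1) (by omega) (by omega)
    have hp := S.purity hb1 hbN (j := j) (by omega) (by omega) hjK
    rw [hp]
    by_cases hlt : n < ((S.τd : ℤ) + lam).toNat
    · rw [if_pos hlt]
      have : ¬ (S.mm (S.gb b) ≤ j) := by omega
      simp [this]
    · rw [if_neg hlt, if_pos (by omega)]
      have : S.mm (S.gb b) ≤ j := by omega
      simp [this]
  · rw [if_neg hn, if_neg (by omega), if_neg (by omega)]

end St
end HG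
namespace HG
namespace St

variable (S : St)

/-- Sub-lemma 2 : a window matching a pattern pins the pattern offset to the true
offset up to inserted zeros and insertions before the boundary. -/
lemma match_count {b : ℕ} (hb1 : 1 ≤ b) (hbN : b ≤ S.N) {l' : ℤ}
    (hm : window S.E S.t S.τd S.τi S.y b = pat S.τd S.τi l') :
    ∃ z : ℕ, (z : ℤ) + ct S.K (S.gb b - S.τd) ≤ ct S.K (S.gb b + S.τi) ∧
      l' = ((S.mm (S.gb b) : ℤ) - S.gb b) + z
        - ((ct S.K (S.mm (S.gb b)) : ℤ) - ct S.K (S.gb b - S.τd)) ∧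
      -(S.τd:ℤ) ≤ l' ∧ l' ≤ S.τi := by
  obtain ⟨hP1, c2, c3, c4, c5, c6⟩ := S.chain hb1 hbN
  have hgb := S.gb_ge b
  have hti := S.hti
  have wlen := S.win_len hb1 hbN
  obtain ⟨hl1, hl2⟩ := pat_bounds _ wlen hm
  set s := S.gb b - S.τd with hs
  set n := S.τd + S.τi with hn
  set mγ := S.mm (S.gb b) with hmγ
  have hsn : s + n = S.gb b + S.τi := by omega
  have hsm : s ≤ mγ := by omega
  have hmsn : mγ ≤ s + n := by omega
  -- count false via the pattern
  have hcnt1 : (window S.E S.t S.τd S.τi S.y b).count false = ((S.τd:ℤ) + l').toNat := by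
    rw [hm, pat_count_false]
  -- count false via positions
  have hcnt2 : (window S.E S.t S.τd S.τi S.y b).count false
      = (List.range' s n).countP (fun j => S.y.getD j false == false) := by
    rw [win_eq]
    exact count_drop_take S.y false n s (by omega) false
  -- split into inserted and surviving positions
  have hsplit := countP_and_split (List.range' s n)
    (fun j => S.y.getD j false == false) (fun j => decide ((j+1) ∈ S.K))
  set z := (List.range' s n).countP
    (fun j => (S.y.getD j false == false) && decide ((j+1) ∈ S.K)) with hz
  -- z is at most the number of insertions in the window
  have hzle : z + ct S.K s ≤ ct S.K (s + n) := by
    have h1 : z ≤ (List.range' s n).countP (fun j => decide ((j+1) ∈ S.K)) := by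
      apply List.countP_mono_left
      intro x _ hx
      exact (Bool.and_elim_right hx)
    have h2 := interval_ct S.K (show s ≤ s + n by omega)
    rw [show s + n - s = n by omega] at h2
    omega
  -- surviving positions show false iff before the boundary image
  have hsur : (List.range' s n).countP
        (fun j => (S.y.getD j false == false) && !decide ((j+1) ∈ S.K))
      = (List.range' s n).countP
        (fun j => decide (j + 1 ≤ mγ) && !decide ((j+1) ∈ S.K)) := by
    apply List.countP_congr
    intro j hj
    rw [List.mem_range'] at hj
    obtain ⟨i, hi, rfl⟩ := hj
    simp only [one_mul]
    by_cases hK : (s + i + 1) ∈ S.K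
    · simp [hK]
    · have hp := S.purity hb1 hbN (j := s + i) (by omega) (by omega) hK
      have hgd : S.y.getD (s + i) false = decide (mγ ≤ s + i) := by
        rw [List.getD_eq_getElem?_getD, hp]
        rfl
      rw [hgd]
      by_cases hle : mγ ≤ s + i
      · simp [hle, hK, show ¬ (s + i + 1 ≤ mγ) by omega]
      · simp [hle, hK, show s + i + 1 ≤ mγ by omega]
  -- split the window range at the boundary image
  have happ : List.range' s (mγ - s) ++ List.range' mγ (s + n - mγ) = List.range' s n := by
    have := List.range'_append (s := s) (m := mγ - s) (n := s + n - mγ) (step := 1)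
    rw [show s + 1*(mγ - s) = mγ by omega] at this
    rw [show (mγ - s) + (s + n - mγ) = n by omega] at this
    exact this
  have hchunk1 : (List.range' s (mγ - s)).countP
        (fun j => decide (j + 1 ≤ mγ) && !decide ((j+1) ∈ S.K))
      = (mγ - s) - ((List.range' s (mγ - s)).countP (fun j => decide ((j+1) ∈ S.K))) := by
    have e1 : (List.range' s (mγ - s)).countP
          (fun j => decide (j + 1 ≤ mγ) && !decide ((j+1) ∈ S.K))
        = (List.range' s (mγ - s)).countP (fun j => !decide ((j+1) ∈ S.K)) := by
      apply List.countP_congr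
      intro j hj
      rw [List.mem_range'] at hj
      obtain ⟨i, hi, rfl⟩ := hj
      simp only [one_mul]
      simp [show s + i + 1 ≤ mγ by omega]
    have e2 := countP_not_split (List.range' s (mγ - s)) (fun j => decide ((j+1) ∈ S.K))
    rw [List.length_range'] at e2
    omega
  have hchunk2 : (List.range' mγ (s + n - mγ)).countP
        (fun j => decide (j + 1 ≤ mγ) && !decide ((j+1) ∈ S.K)) = 0 := by
    rw [List.countP_eq_zero]
    intro j hj
    rw [List.mem_range'] at hj
    obtain ⟨i, hi, rfl⟩ := hj
    simp only [one_mul]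
    simp [show ¬ (mγ + i + 1 ≤ mγ) by omega]
  have hinterval1 := interval_ct S.K (show s ≤ mγ by omega)
  have hsur2 : (List.range' s n).countP
        (fun j => decide (j + 1 ≤ mγ) && !decide ((j+1) ∈ S.K))
      = (mγ - s) - (ct S.K mγ - ct S.K s) := by
    rw [← happ, List.countP_append, hchunk1, hchunk2]
    have h3 : (List.range' s (mγ - s)).countP (fun j => decide ((j+1) ∈ S.K))
        = ct S.K mγ - ct S.K s := by omega
    omega
  have hctm : ct S.K s ≤ ct S.K mγ := ct_mono S.K (by omega)
  have hctm2 : ct S.K mγ ≤ ct S.K (s+n) := ct_mono S.K (by omega)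
  have hlen1 : (List.range' s (mγ - s)).countP (fun j => decide ((j+1) ∈ S.K)) ≤ mγ - s := by
    have := List.countP_le_length (p := fun j => decide ((j+1) ∈ S.K))
      (l := List.range' s (mγ - s))
    simpa using this
  have hwin : (window S.E S.t S.τd S.τi S.y b).count false
      = z + ((mγ - s) - (ct S.K mγ - ct S.K s)) := by
    rw [hcnt2, hsplit, hsur, hsur2]
  have hfin : ((S.τd:ℤ) + l').toNat = z + ((mγ - s) - (ct S.K mγ - ct S.K s)) := by
    rw [← hcnt1, hwin]
  have hctsn : ct S.K (s + n) = ct S.K (S.gb b + S.τi) := by rw [hsn]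
  have hgbτ : S.τd ≤ S.gb b := by omega
  refine ⟨z, by omega, ?_, hl1, hl2⟩
  have hsub : (ct S.K mγ - ct S.K s) ≤ mγ - s := by omega
  omega

/-- Sub-lemma 3 : if the offset is exact and there are no edits in the data range,
the extracted block is correct. -/
lemma extract_good {b : ℕ} (hb1 : 1 ≤ b) (hbN : b ≤ S.N)
    (hJ0 : ct S.J ((S.E+2*S.t)*(b-1) + S.E) = ct S.J ((S.E+2*S.t)*(b-1)))
    (hK0 : ct S.K (S.mm ((S.E+2*S.t)*(b-1)) + S.E) = ct S.K (S.mm ((S.E+2*S.t)*(b-1)))) :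
    (S.y.drop (S.mm ((S.E+2*S.t)*(b-1)))).take S.E
      = (S.c.drop ((S.E+2*S.t)*(b-1))).take S.E := by
  obtain ⟨hP1, c2, c3, c4, c5, c6⟩ := S.chain hb1 hbN
  apply List.ext_getElem?
  intro nn
  rw [drop_take_getElem?, drop_take_getElem?]
  by_cases hnE : nn < S.E
  · rw [if_pos hnE, if_pos hnE]
    have hq : (S.mm ((S.E+2*S.t)*(b-1))) + nn < S.y.length := by omega
    have hqK : ((S.mm ((S.E+2*S.t)*(b-1))) + nn + 1) ∉ S.K :=
      not_mem_of_ct_eq S.K (show (S.mm ((S.E+2*S.t)*(b-1))) ≤ (S.mm ((S.E+2*S.t)*(b-1))) + S.E by omega) hK0 (by omega) (by omega)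
    obtain ⟨p, hp, hpJ, hpr, hval⟩ := S.trans hq hqK
    have hp'J : (((S.E+2*S.t)*(b-1)) + nn + 1) ∉ S.J :=
      not_mem_of_ct_eq S.J (show ((S.E+2*S.t)*(b-1)) ≤ ((S.E+2*S.t)*(b-1)) + S.E by omega) hJ0 (by omega) (by omega)
    -- rank computations
    have hP0M : ((S.E+2*S.t)*(b-1)) ≤ S.c.length := by
      have : ((S.E+2*S.t)*(b-1)) ≤ (S.E+2*S.t)*b := by
        rw [S.pdiff hb1, gb]; omega
      omega
    have hme := S.mm_eq hP0M
    have hctK : ct S.K ((S.mm ((S.E+2*S.t)*(b-1))) + nn + 1) = ct S.K (S.mm ((S.E+2*S.t)*(b-1))) := by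
      have h1 := ct_mono S.K (show (S.mm ((S.E+2*S.t)*(b-1))) ≤ (S.mm ((S.E+2*S.t)*(b-1))) + nn + 1 by omega)
      have h2 := ct_mono S.K (show (S.mm ((S.E+2*S.t)*(b-1))) + nn + 1 ≤ (S.mm ((S.E+2*S.t)*(b-1))) + S.E by omega)
      omega
    have hctJ : ct S.J (((S.E+2*S.t)*(b-1)) + nn + 1) = ct S.J ((S.E+2*S.t)*(b-1)) := by
      have h1 := ct_mono S.J (show ((S.E+2*S.t)*(b-1)) ≤ ((S.E+2*S.t)*(b-1)) + nn + 1 by omega)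
      have h2 := ct_mono S.J (show ((S.E+2*S.t)*(b-1)) + nn + 1 ≤ ((S.E+2*S.t)*(b-1)) + S.E by omega)
      omega
    have rq := rkct S.K ((S.mm ((S.E+2*S.t)*(b-1))) + nn + 1)
    have rp := rkct S.J (p+1)
    have rp' := rkct S.J (((S.E+2*S.t)*(b-1)) + nn + 1)
    have rP0 := rkct S.J ((S.E+2*S.t)*(b-1))
    have hctKm0 := S.ctK_le (S.mm ((S.E+2*S.t)*(b-1)))
    have hctJp := S.ctJ_le (p+1)
    have hrkeq : rk S.J (p+1) = rk S.J (((S.E+2*S.t)*(b-1)) + nn + 1) := by omega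
    have h1 := (le_iff_rk_le S.J (by omega) hpJ (((S.E+2*S.t)*(b-1)) + nn + 1)).2 (by omega)
    have h2 := (le_iff_rk_le S.J (by omega) hp'J (p+1)).2 (by omega)
    have hpe : p = ((S.E+2*S.t)*(b-1)) + nn := by omega
    rw [hval, hpe]
  · rw [if_neg hnE, if_neg hnE]

end St
end HG
namespace HG

/-- algorithm's offset after block `b`. -/
def lof (E t τd τi : ℕ) (y : List Bool) (b : ℕ) : ℤ :=
  ((uv E t τd τi y b).2 : ℤ) - ((uv E t τd τi y b).1 : ℤ)

/-- penalty of block `b` : 1 for erasure, 2 for undetected wrong block, 0 otherwise. -/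
def cost (E t τd τi : ℕ) (y c : List Bool) (b : ℕ) : ℕ :=
  if uv E t τd τi y b ≠ uv E t τd τi y (b-1) then 1
  else if extractBlock E t τd τi y b ≠ cBlock E t c b then 2 else 0

lemma stepUV_eq (E t τd τi : ℕ) (y : List Bool) (b : ℕ) (s : ℕ×ℕ) :
    stepUV E t τd τi y b s = if window E t τd τi y b = pat τd τi ((s.2:ℤ) - (s.1:ℤ)) then s
      else match (List.range (τd+τi+1)).find?
          (fun n : ℕ => n != 0 && (window E t τd τi y b == pat τd τi (((s.2:ℤ)-(s.1:ℤ)) - (n:ℤ)))) with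
        | some n => ((s.1+n : ℕ), s.2)
        | none => (s.1, s.2+1) := rfl

namespace St

/-- the true offset at boundary `P`. -/
noncomputable def lam (S : St) (P : ℕ) : ℤ := (S.mm P : ℤ) - P

variable (S : St)

lemma step_main {b : ℕ} (hb1 : 1 ≤ b) (hbN : b ≤ S.N)
    (IH2 : lof S.E S.t S.τd S.τi S.y (b-1) - S.lam ((S.E+2*S.t)*(b-1)) + S.td
        ≤ (S.τd : ℤ) + S.τi + ct S.J ((S.E+2*S.t)*(b-1))) :
    cost S.E S.t S.τd S.τi S.y S.c b
        + (S.lam ((S.E+2*S.t)*b) - lof S.E S.t S.τd S.τi S.y b).natAbs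
        + ct S.J ((S.E+2*S.t)*(b-1)) + ct S.K (S.mm ((S.E+2*S.t)*(b-1)))
      ≤ (S.lam ((S.E+2*S.t)*(b-1)) - lof S.E S.t S.τd S.τi S.y (b-1)).natAbs
        + ct S.J ((S.E+2*S.t)*b) + ct S.K (S.mm ((S.E+2*S.t)*b)) ∧
    lof S.E S.t S.τd S.τi S.y b - S.lam ((S.E+2*S.t)*b) + S.td
        ≤ (S.τd : ℤ) + S.τi + ct S.J ((S.E+2*S.t)*b) := by
  obtain ⟨hP1, c2, c3, c4, c5, c6⟩ := S.chain hb1 hbN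
  have hgb := S.gb_ge b
  have hti := S.hti
  have htd := S.htd
  have ht1 := S.ht1
  have ht2 := S.ht2
  have hpd := S.pdiff hb1
  have hP0M : (S.E+2*S.t)*(b-1) ≤ S.c.length := by
    have : (S.E+2*S.t)*(b-1) ≤ S.gb b := by rw [gb]; omega
    omega
  have hgM : S.gb b ≤ S.c.length := by omega
  have e0 := S.mm_eq hP0M
  have eg := S.mm_eq hgM
  have e1 := S.mm_eq hP1
  have r0 := rkct S.J ((S.E+2*S.t)*(b-1))
  have rg := rkct S.J (S.gb b)
  have r1 := rkct S.J ((S.E+2*S.t)*b)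
  have cJ0 := S.ctJ_le ((S.E+2*S.t)*(b-1))
  have cJg := S.ctJ_le (S.gb b)
  have cJ1 := S.ctJ_le ((S.E+2*S.t)*b)
  have cK0 := S.ctK_le (S.mm ((S.E+2*S.t)*(b-1)))
  have cKg := S.ctK_le (S.mm (S.gb b))
  have cK1 := S.ctK_le (S.mm ((S.E+2*S.t)*b))
  have cKs := S.ctK_le (S.gb b - S.τd)
  have cKe := S.ctK_le (S.gb b + S.τi)
  have mJ1 : ct S.J ((S.E+2*S.t)*(b-1)) ≤ ct S.J (S.gb b) := ct_mono _ (by rw [gb]; omega)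
  have mJ2 : ct S.J (S.gb b) ≤ ct S.J ((S.E+2*S.t)*b) := ct_mono _ (by omega)
  have mK1 : ct S.K (S.mm ((S.E+2*S.t)*(b-1))) ≤ ct S.K (S.gb b - S.τd) := ct_mono _ (by omega)
  have mK2 : ct S.K (S.gb b - S.τd) ≤ ct S.K (S.mm (S.gb b)) := ct_mono _ (by omega)
  have mK3 : ct S.K (S.mm (S.gb b)) ≤ ct S.K (S.gb b + S.τi) := ct_mono _ (by omega)
  have mK4 : ct S.K (S.gb b + S.τi) ≤ ct S.K (S.mm ((S.E+2*S.t)*b)) := ct_mono _ (by omega)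
  have hl0 : S.lam ((S.E+2*S.t)*(b-1))
      = (S.mm ((S.E+2*S.t)*(b-1)) : ℤ) - (((S.E+2*S.t)*(b-1) : ℕ) : ℤ) := rfl
  have hlg : S.lam (S.gb b) = (S.mm (S.gb b) : ℤ) - ((S.gb b : ℕ) : ℤ) := rfl
  have hl1 : S.lam ((S.E+2*S.t)*b) = (S.mm ((S.E+2*S.t)*b) : ℤ) - (((S.E+2*S.t)*b : ℕ) : ℤ) := rfl
  have hbeq : b - 1 + 1 = b := by omega
  have huv : uv S.E S.t S.τd S.τi S.y (b-1+1)
      = stepUV S.E S.t S.τd S.τi S.y (b-1+1) (uv S.E S.t S.τd S.τi S.y (b-1)) := rfl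
  rw [hbeq] at huv
  rw [stepUV_eq] at huv
  by_cases hm : window S.E S.t S.τd S.τi S.y b
      = pat S.τd S.τi (((uv S.E S.t S.τd S.τi S.y (b-1)).2:ℤ)
          - ((uv S.E S.t S.τd S.τi S.y (b-1)).1:ℤ))
  · -- Branch 1 : exact match, no erasure
    rw [if_pos hm] at huv
    have hlof : lof S.E S.t S.τd S.τi S.y b = lof S.E S.t S.τd S.τi S.y (b-1) := by
      unfold lof
      rw [huv]
    have hmm : window S.E S.t S.τd S.τi S.y b
        = pat S.τd S.τi (lof S.E S.t S.τd S.τi S.y (b-1)) := hm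
    obtain ⟨z, hz1, hz2, hzl, hzr⟩ := S.match_count hb1 hbN hmm
    by_cases hext : extractBlock S.E S.t S.τd S.τi S.y b = cBlock S.E S.t S.c b
    · have hcost : cost S.E S.t S.τd S.τi S.y S.c b = 0 := by
        rw [cost, if_neg (by simp [huv]), if_neg (by simp [hext])]
      rw [hcost, hlof]
      constructor
      · omega
      · omega
    · -- undetected error : there must be edits in the data range
      have hwit : ¬ (lof S.E S.t S.τd S.τi S.y (b-1) = S.lam ((S.E+2*S.t)*(b-1)) ∧
          ct S.J ((S.E+2*S.t)*(b-1) + S.E) = ct S.J ((S.E+2*S.t)*(b-1)) ∧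
          ct S.K (S.mm ((S.E+2*S.t)*(b-1)) + S.E) = ct S.K (S.mm ((S.E+2*S.t)*(b-1)))) := by
        rintro ⟨w1, w2, w3⟩
        apply hext
        have hstart : ((((S.E + 2 * S.t) * (b - 1) : ℕ) : ℤ) +
            (((uv S.E S.t S.τd S.τi S.y b).2 : ℤ) - ((uv S.E S.t S.τd S.τi S.y b).1 : ℤ))).toNat
            = S.mm ((S.E+2*S.t)*(b-1)) := by
          have : ((uv S.E S.t S.τd S.τi S.y b).2 : ℤ) - ((uv S.E S.t S.τd S.τi S.y b).1 : ℤ)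
              = lof S.E S.t S.τd S.τi S.y b := rfl
          rw [this, hlof, w1, hl0]
          omega
        rw [extractBlock, hstart, cBlock]
        exact S.extract_good hb1 hbN w2 w3
      have hcost : cost S.E S.t S.τd S.τi S.y S.c b = 2 := by
        rw [cost, if_neg (by simp [huv]), if_pos (by simp [hext])]
      have mJe : ct S.J ((S.E+2*S.t)*(b-1)) ≤ ct S.J ((S.E+2*S.t)*(b-1) + S.E) :=
        ct_mono _ (by omega)
      have mJe2 : ct S.J ((S.E+2*S.t)*(b-1) + S.E) ≤ ct S.J (S.gb b) :=
        ct_mono _ (by rw [gb]; omega)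
      have mKe : ct S.K (S.mm ((S.E+2*S.t)*(b-1))) ≤ ct S.K (S.mm ((S.E+2*S.t)*(b-1)) + S.E) :=
        ct_mono _ (by omega)
      have mKe2 : ct S.K (S.mm ((S.E+2*S.t)*(b-1)) + S.E) ≤ ct S.K (S.gb b - S.τd) :=
        ct_mono _ (by omega)
      rw [hcost, hlof]
      constructor
      · omega
      · omega
  · rw [if_neg hm] at huv
    cases hf : (List.range (S.τd+S.τi+1)).find?
        (fun n : ℕ => n != 0 && (window S.E S.t S.τd S.τi S.y b
          == pat S.τd S.τi ((((uv S.E S.t S.τd S.τi S.y (b-1)).2:ℤ)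
              - ((uv S.E S.t S.τd S.τi S.y (b-1)).1:ℤ)) - (n:ℤ)))) with
    | some n =>
      -- Branch 2 : erasure with deletions detected
      rw [hf] at huv
      have hp := List.find?_some hf
      simp only [Bool.and_eq_true, bne_iff_ne, ne_eq, beq_iff_eq] at hp
      obtain ⟨hn0, hw⟩ := hp
      have hmm : window S.E S.t S.τd S.τi S.y b
          = pat S.τd S.τi (lof S.E S.t S.τd S.τi S.y (b-1) - (n:ℤ)) := hw
      obtain ⟨z, hz1, hz2, hzl, hzr⟩ := S.match_count hb1 hbN hmm
      have hlof : lof S.E S.t S.τd S.τi S.y b = lof S.E S.t S.τd S.τi S.y (b-1) - (n:ℤ) := by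
        unfold lof
        rw [huv]
        push_cast
        ring
      have hcost : cost S.E S.t S.τd S.τi S.y S.c b = 1 := by
        rw [cost, if_pos]
        rw [huv]
        intro h
        have h2 := congrArg Prod.fst h
        simp at h2
        omega
      rw [hcost, hlof]
      constructor
      · omega
      · omega
    | none =>
      -- Branch 3 : erasure with an insertion detected
      rw [hf] at huv
      have hlof : lof S.E S.t S.τd S.τi S.y b = lof S.E S.t S.τd S.τi S.y (b-1) + 1 := by
        unfold lof
        rw [huv]
        push_cast
        ring
      have hcost : cost S.E S.t S.τd S.τi S.y S.c b = 1 := by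
        rw [cost, if_pos]
        rw [huv]
        intro h
        have h2 := congrArg Prod.snd h
        simp at h2
      have hD : ct S.K (S.mm ((S.E+2*S.t)*(b-1))) + 1 ≤ ct S.K (S.mm ((S.E+2*S.t)*b)) ∨
          lof S.E S.t S.τd S.τi S.y (b-1) + 1 ≤ S.lam ((S.E+2*S.t)*(b-1)) := by
        by_contra hc
        push_neg at hc
        obtain ⟨hIi, hlam⟩ := hc
        have hKeq : ct S.K (S.mm ((S.E+2*S.t)*b)) = ct S.K (S.mm ((S.E+2*S.t)*(b-1))) := by
          have : ct S.K (S.mm ((S.E+2*S.t)*(b-1))) ≤ ct S.K (S.mm ((S.E+2*S.t)*b)) := by omega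
          omega
        have hpure := S.window_pure hb1 hbN hKeq
        have hKg : ct S.K (S.mm (S.gb b)) = ct S.K (S.mm ((S.E+2*S.t)*(b-1))) := by omega
        -- the algorithm's offset is at least the window offset
        have hγle : ((S.mm (S.gb b) : ℤ) - S.gb b) ≤ lof S.E S.t S.τd S.τi S.y (b-1) := by omega
        have hn0cap : lof S.E S.t S.τd S.τi S.y (b-1) - ((S.mm (S.gb b) : ℤ) - S.gb b)
            ≤ (S.τd : ℤ) + S.τi := by omega
        set n₀ : ℕ := (lof S.E S.t S.τd S.τi S.y (b-1) - ((S.mm (S.gb b) : ℤ) - S.gb b)).toNat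
          with hn₀
        have hn₀eq : (n₀ : ℤ) = lof S.E S.t S.τd S.τi S.y (b-1)
            - ((S.mm (S.gb b) : ℤ) - S.gb b) := by omega
        by_cases hz : n₀ = 0
        · apply hm
          rw [hpure]
          congr 1
          show ((S.mm (S.gb b) : ℤ) - S.gb b) = lof S.E S.t S.τd S.τi S.y (b-1)
          have : (n₀ : ℤ) = 0 := by exact_mod_cast hz
          omega
        · have hmem : n₀ ∈ List.range (S.τd+S.τi+1) := by
            rw [List.mem_range]
            omega
          have := List.find?_eq_none.mp hf n₀ hmem
          apply this
          simp only [Bool.and_eq_true, bne_iff_ne, ne_eq, beq_iff_eq]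
          refine ⟨hz, ?_⟩
          rw [hpure]
          congr 1
          show ((S.mm (S.gb b) : ℤ) - S.gb b) = lof S.E S.t S.τd S.τi S.y (b-1) - (n₀:ℤ)
          omega
      rw [hcost, hlof]
      constructor
      · rcases hD with hD | hD
        · omega
        · omega
      · rcases hD with hD | hD
        · omega
        · omega

end St
end HG
namespace HG
namespace St

variable (S : St)

lemma main_claim : ∀ b, b ≤ S.N →
    (∑ j ∈ Finset.Icc 1 b, cost S.E S.t S.τd S.τi S.y S.c j)
        + (S.lam ((S.E+2*S.t)*b) - lof S.E S.t S.τd S.τi S.y b).natAbs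
      ≤ ct S.J ((S.E+2*S.t)*b) + ct S.K (S.mm ((S.E+2*S.t)*b)) ∧
    lof S.E S.t S.τd S.τi S.y b - S.lam ((S.E+2*S.t)*b) + S.td
      ≤ (S.τd:ℤ) + S.τi + ct S.J ((S.E+2*S.t)*b) := by
  intro b
  induction b with
  | zero =>
    intro _
    have h1 : lof S.E S.t S.τd S.τi S.y 0 = 0 := rfl
    have h2 : S.mm ((S.E+2*S.t)*0) = 0 := by
      rw [Nat.mul_zero, mm, if_pos]
      simp [rk]
    have h3 : S.lam ((S.E+2*S.t)*0) = 0 := by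
      rw [lam, h2]
      simp
    have ht1 := S.ht1
    rw [h1, h3]
    simp
    omega
  | succ b ih =>
    intro hbN
    obtain ⟨ih1, ih2⟩ := ih (by omega)
    have hstep := S.step_main (b := b+1) (by omega) hbN
      (by simpa using ih2)
    simp only [Nat.add_sub_cancel] at hstep
    obtain ⟨s1, s2⟩ := hstep
    have hsum := Finset.sum_Icc_succ_top (show 1 ≤ b+1 by omega)
      (fun j => cost S.E S.t S.τd S.τi S.y S.c j)
    rw [hsum]
    constructor
    · omega
    · exact s2

end St
end HG
theorem stmt15 (N E t td ti : ℕ) (r : ℤ) (hr : r = (ti : ℤ) - (td : ℤ))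
    (htd : 1 ≤ td) (hti : 1 ≤ ti) (htdi : td + ti ≤ t)
    (τd τi : ℕ)
    (hτd : (τd : ℤ) = ((t : ℤ) - r) / 2) (hτi : (τi : ℤ) = ((t : ℤ) + r) / 2)
    (blocks : List (List Bool)) (hNb : blocks.length = N)
    (hEb : ∀ cb ∈ blocks, cb.length = E)
    (c y : List Bool) (hc : c = hag t blocks)
    (J K : Finset ℕ) (hJc : J.card = td) (hKc : K.card = ti)
    (hy : y.length = c.length - td + ti ∧ del y K = del c J)
    (hJpos : J ⊆ Finset.Icc 1 c.length) (hKpos : K ⊆ Finset.Icc 1 y.length)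
    -- the blocks marked as erased by Algorithm 1
    (Pe : Finset ℕ)
    (hPe : Pe = (Finset.Icc 1 N).filter (fun b =>
      uv E t τd τi y b ≠ uv E t τd τi y (b - 1)))
    -- the unmarked blocks whose extracted block differs from the original
    (Ps : Finset ℕ)
    (hPs : Ps = (Finset.Icc 1 N).filter (fun b =>
      uv E t τd τi y b = uv E t τd τi y (b - 1) ∧
      extractBlock E t τd τi y b ≠ cBlock E t c b)) :
    Pe.card + 2 * Ps.card ≤ t ∧
    ∀ b ∈ Finset.Icc 1 N, b ∉ Pe ∪ Ps →
      extractBlock E t τd τi y b = cBlock E t c b := by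
  classical
  have f1 : td ≤ τd := by omega
  have f2 : ti ≤ τi := by omega
  have f3 : τd + ti ≤ t := by omega
  have f4 : τi + td ≤ t := by omega
  have hMlen : c.length = N * (E + 2*t) := by
    rw [hc, HG.hag_length t E blocks hEb, hNb]
  have hmark : ∀ b, 1 ≤ b → b ≤ N → ∀ p, (E+2*t)*(b-1)+E ≤ p → p < (E+2*t)*b →
      getElem? c p = some (decide ((E+2*t)*(b-1)+E+t ≤ p)) := by
    intro b hb1 hbN p h1 h2
    have hi : b - 1 < blocks.length := by rw [hNb]; omega
    have hmul : (E+2*t)*b = (E+2*t)*(b-1) + (E+2*t) := by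
      rw [← Nat.mul_succ]
      congr 1
      omega
    have hs1 : E ≤ p - (E+2*t)*(b-1) := by omega
    have hs2 : p - (E+2*t)*(b-1) < E + 2*t := by omega
    have hv := HG.hag_val t E blocks hEb (b-1) (p - (E+2*t)*(b-1)) hi hs1 hs2
    rw [show (E+2*t)*(b-1) + (p - (E+2*t)*(b-1)) = p by omega] at hv
    rw [hc, hv]
    congr 1
    rw [decide_eq_decide]
    omega
  set S : HG.St := ⟨N, E, t, td, ti, τd, τi, c, y, J, K, htd, hti, htdi,
    f1, f2, f3, f4, hJc, hKc, hy.2, hMlen, hmark⟩ with hSdef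
  constructor
  · -- the weight bound
    have hmain : (∑ j ∈ Finset.Icc 1 N, HG.cost E t τd τi y c j)
        + (S.lam ((E+2*t)*N) - HG.lof E t τd τi y N).natAbs
        ≤ HG.ct J ((E+2*t)*N) + HG.ct K (S.mm ((E+2*t)*N)) := (S.main_claim N (le_refl N)).1
    have h2 : HG.ct J ((E+2*t)*N) ≤ td := S.ctJ_le ((E+2*t)*N)
    have h3 : HG.ct K (S.mm ((E+2*t)*N)) ≤ ti := S.ctK_le (S.mm ((E+2*t)*N))
    have hsum : (∑ j ∈ Finset.Icc 1 N, HG.cost E t τd τi y c j) ≤ t := by omega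
    have hcsplit : ∀ j : ℕ, HG.cost E t τd τi y c j
        = (if uv E t τd τi y j ≠ uv E t τd τi y (j-1) then 1 else 0)
        + (if uv E t τd τi y j = uv E t τd τi y (j-1) ∧
            extractBlock E t τd τi y j ≠ cBlock E t c j then 2 else 0) := by
      intro j
      rw [HG.cost]
      by_cases h1 : uv E t τd τi y j = uv E t τd τi y (j-1)
      · simp [h1]
      · simp [h1]
    have hPec : Pe.card = ∑ j ∈ Finset.Icc 1 N,
        (if uv E t τd τi y j ≠ uv E t τd τi y (j-1) then 1 else 0) := by
      rw [hPe, Finset.card_eq_sum_ones, Finset.sum_filter]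
    have hPsc : 2 * Ps.card = ∑ j ∈ Finset.Icc 1 N,
        (if uv E t τd τi y j = uv E t τd τi y (j-1) ∧
            extractBlock E t τd τi y j ≠ cBlock E t c j then 2 else 0) := by
      rw [hPs, Finset.card_eq_sum_ones, Finset.mul_sum, Finset.sum_filter]
      simp
    calc Pe.card + 2 * Ps.card
        = ∑ j ∈ Finset.Icc 1 N, HG.cost E t τd τi y c j := by
          rw [hPec, hPsc, ← Finset.sum_add_distrib]
          exact Finset.sum_congr rfl (fun j _ => (hcsplit j).symm)
      _ ≤ t := hsum
  · -- correctness of unmarked blocks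
    intro b hbmem hbnot
    rw [Finset.mem_union] at hbnot
    push_neg at hbnot
    obtain ⟨hnPe, hnPs⟩ := hbnot
    rw [hPe, Finset.mem_filter] at hnPe
    rw [hPs, Finset.mem_filter] at hnPs
    by_contra hne
    by_cases heq : uv E t τd τi y b = uv E t τd τi y (b-1)
    · exact hnPs ⟨hbmem, heq, hne⟩
    · exact hnPe ⟨hbmem, heq⟩
end

section
/- A code that corrects e erasures and m substitutions whenever e + 2m ≤ t (e.g., any code with minimum Hamming distance at least t+1) combined with the Hagiwara marker construction and Algorithm 1 yields a code correcting any combination of t_d ≥ 1 deletions and t_i ≥ 1 insertions with t_d + t_i ≤ t: distinct Hagiwara codewords c ≠ c' never yield the same received word y under such composite errors whose Algorithm-1 outputs decode to the same codeword. -/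
namespace Stmt16Aux

lemma sublist_replicate_elim {l z : List Bool} :
    ∀ k, (true :: l).Sublist (List.replicate k false ++ z) → (true :: l).Sublist z := by
  intro k
  induction k with
  | zero => simpa using id
  | succ k ih =>
    intro h
    rw [List.replicate_succ, List.cons_append] at h
    cases h with
    | cons _ h' => exact ih h'

lemma zsub_len {t : ℕ} (ht : 1 ≤ t) :
    ∀ (x x' : List Bool), (x' ++ List.replicate t false).Sublist
      (x ++ (List.replicate t false ++ List.replicate t true)) → x'.length ≤ x.length := by
  intro x
  induction x with
  | nil =>
    intro x' h
    simp only [List.nil_append] at h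
    have hall : ∀ a ∈ x', a = false := by
      intro a ha
      by_contra hne
      have ha' : a = true := by cases a <;> simp_all
      subst ha'
      have h1 : (true :: List.replicate t false).Sublist (x' ++ List.replicate t false) := by
        have h0 : [true].Sublist x' := List.singleton_sublist.mpr ha
        simpa using h0.append (List.Sublist.refl _)
      have h3 := sublist_replicate_elim t (h1.trans h)
      have h4 : false ∈ List.replicate t true := h3.subset (by
        simp [List.mem_replicate]
        omega)
      exact absurd (List.eq_of_mem_replicate h4) (by simp)
    have hc := h.count_le false
    rw [List.count_append, List.count_append] at hc
    simp [List.count_replicate] at hc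
    have hcl : List.count false x' = x'.length :=
      List.count_eq_length.mpr (fun b hb => (hall b hb).symm)
    omega
  | cons c x ih =>
    intro x' h
    cases x' with
    | nil => simp
    | cons c' r' =>
      rw [List.cons_append, List.cons_append] at h
      cases h with
      | cons _ h' =>
        have := ih (c' :: r') (by rwa [List.cons_append])
        simp at this ⊢
        omega
      | cons_cons _ h' =>
        have := ih r' h'
        simp
        omega

lemma zsub_eq {t : ℕ} (ht : 1 ≤ t) :
    ∀ (x x' : List Bool), (x' ++ List.replicate t false).Sublist
      (x ++ (List.replicate t false ++ List.replicate t true)) →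
      x'.length = x.length → x' = x := by
  intro x
  induction x with
  | nil =>
    intro x' _ hl
    simpa using List.length_eq_zero_iff.mp (by simpa using hl)
  | cons c x ih =>
    intro x' h hl
    cases x' with
    | nil => simp at hl
    | cons c' r' =>
      rw [List.cons_append, List.cons_append] at h
      cases h with
      | cons _ h' =>
        exfalso
        have := zsub_len ht x (c' :: r') (by rwa [List.cons_append])
        simp at this hl
        omega
      | cons_cons _ h' =>
        have := ih r' h' (by simpa using hl)
        rw [this]

lemma hag_cons (t : ℕ) (b : List Bool) (bs : List (List Bool)) :
    hag t (b :: bs) = (b ++ marker t) ++ hag t bs := by simp [hag]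

lemma marker_length (t : ℕ) : (marker t).length = t + t := by
  simp [marker]

lemma hag_length (t E : ℕ) : ∀ (bs : List (List Bool)), (∀ b ∈ bs, b.length = E) →
    (hag t bs).length = bs.length * (E + (t + t)) := by
  intro bs
  induction bs with
  | nil => intro _; simp [hag]
  | cons b bs ih =>
    intro hb
    rw [hag_cons]
    have h1 : b.length = E := hb b (by simp)
    have h2 := ih (fun c hc => hb c (List.mem_cons_of_mem _ hc))
    simp only [List.length_append, List.length_cons, marker_length, h1, h2]
    ring

lemma key (t E : ℕ) (ht : 1 ≤ t) (b b' : List Bool) (bs : List (List Bool))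
    (u u' w' : List Bool) (S' : ℕ)
    (hbE : b.length = E) (hb'E : b'.length = E)
    (hsuf : u' <:+ u) (hsub : u.Sublist (hag t (b :: bs)))
    (hu' : u' = (b' ++ marker t) ++ w')
    (hS' : u'.length + S' = (hag t (b :: bs)).length) (hS't : S' ≤ t) :
    b' = b := by
  rw [hag_cons] at hsub hS'
  obtain ⟨α, ω, hu, hα, hω⟩ := List.sublist_append_iff.mp hsub
  obtain ⟨π, hπ⟩ := hsuf
  have hωlen : ω.length ≤ (hag t bs).length := hω.length_le
  have hαlen : α.length ≤ E + (t + t) := by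
    have := hα.length_le
    simpa [hbE, marker_length] using this
  have hSlen : u'.length + S' = (E + (t + t)) + (hag t bs).length := by
    simp only [List.length_append, hbE, marker_length] at hS'
    omega
  have hu'len : u'.length = (E + (t + t)) + w'.length := by
    simp [hu', hb'E, marker_length, List.length_append]; omega
  have hulen : u.length = π.length + u'.length := by
    rw [← hπ]; simp
  have huslen : u.length = α.length + ω.length := by rw [hu]; simp
  have hPlen : π.length + E + t ≤ α.length := by omega
  -- the prefix (π ++ b') ++ 0^t of u
  have hPu : ((π ++ b') ++ List.replicate t false) <+: u := by
    refine ⟨List.replicate t true ++ w', ?_⟩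
    rw [← hπ, hu']
    simp [marker, List.append_assoc]
  have hαu : α <+: u := ⟨ω, hu.symm⟩
  have hPα : ((π ++ b') ++ List.replicate t false) <+: α := by
    refine List.prefix_of_prefix_length_le hPu hαu ?_
    simp [hb'E]
    omega
  have hPsub : ((π ++ b') ++ List.replicate t false).Sublist
      (b ++ (List.replicate t false ++ List.replicate t true)) := by
    have := hPα.sublist.trans hα
    simpa [marker] using this
  have hπb' : (π ++ b').length ≤ b.length := zsub_len ht b (π ++ b') hPsub
  have hπeq : π = [] := by
    have h9 := hπb'
    simp only [List.length_append, hbE, hb'E] at h9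
    exact List.length_eq_zero_iff.mp (by omega)
  subst hπeq
  simp only [List.nil_append] at hPsub
  exact zsub_eq ht b b' hPsub (by omega)

lemma main (t E : ℕ) (ht : 1 ≤ t) :
    ∀ (bs bs' : List (List Bool)), bs.length = bs'.length →
      (∀ b ∈ bs, b.length = E) → (∀ b ∈ bs', b.length = E) →
      ∀ (u u' : List Bool) (S S' : ℕ),
        u.Sublist (hag t bs) → u'.Sublist (hag t bs') → (u' <:+ u ∨ u <:+ u') →
        u.length + S = (hag t bs).length → u'.length + S' = (hag t bs').length →
        S ≤ t → S' ≤ t →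
        ((bs.zip bs').filter (fun p => decide (p.1 ≠ p.2))).length ≤ max S S' := by
  intro bs
  induction bs with
  | nil =>
    intro bs' _ _ _ u u' S S' _ _ _ _ _ _ _
    simp
  | cons b bs ih =>
    intro bs' hlen hbE hb'E u u' S S' hsub hsub' hcomp hS hS' hSt hS't
    cases bs' with
    | nil => simp at hlen
    | cons b' bs' =>
      have hbl : b.length = E := hbE b (by simp)
      have hb'l : b'.length = E := hb'E b' (by simp)
      have hbsE : ∀ c ∈ bs, c.length = E := fun c hc => hbE c (List.mem_cons_of_mem _ hc)
      have hbs'E : ∀ c ∈ bs', c.length = E := fun c hc => hb'E c (List.mem_cons_of_mem _ hc)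
      have hlen' : bs.length = bs'.length := by simpa using hlen
      have hn : (hag t (b :: bs)).length = (hag t (b' :: bs')).length := by
        rw [hag_length t E _ hbE, hag_length t E _ hb'E, hlen]
      have hrest : (hag t bs).length = (hag t bs').length := by
        rw [hag_length t E _ hbsE, hag_length t E _ hbs'E, hlen']
      have hsub2 : u.Sublist ((b ++ marker t) ++ hag t bs) := by rwa [hag_cons] at hsub
      have hsub2' : u'.Sublist ((b' ++ marker t) ++ hag t bs') := by rwa [hag_cons] at hsub'
      obtain ⟨α, ω, hu, hα, hω⟩ := List.sublist_append_iff.mp hsub2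
      obtain ⟨α', ω', hu', hα', hω'⟩ := List.sublist_append_iff.mp hsub2'
      have hαl : α.length ≤ E + (t + t) := by
        have := hα.length_le; simpa [hbl, marker_length] using this
      have hα'l : α'.length ≤ E + (t + t) := by
        have := hα'.length_le; simpa [hb'l, marker_length] using this
      have hωl : ω.length ≤ (hag t bs).length := hω.length_le
      have hω'l : ω'.length ≤ (hag t bs').length := hω'.length_le
      have hSc : u.length + S = (E + (t + t)) + (hag t bs).length := by
        rw [hag_cons] at hS
        simp only [List.length_append, hbl, marker_length] at hS
        omega
      have hS'c : u'.length + S' = (E + (t + t)) + (hag t bs').length := by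
        rw [hag_cons] at hS'
        simp only [List.length_append, hb'l, marker_length] at hS'
        omega
      have hulen : u.length = α.length + ω.length := by rw [hu]; simp
      have hu'len : u'.length = α'.length + ω'.length := by rw [hu']; simp
      -- comparability of tails
      have hωsu : ω <:+ u := ⟨α, hu.symm⟩
      have hω'su' : ω' <:+ u' := ⟨α', hu'.symm⟩
      have hcompt : ω' <:+ ω ∨ ω <:+ ω' := by
        rcases hcomp with hc | hc
        · exact List.suffix_or_suffix_of_suffix (hω'su'.trans hc) hωsu
        · rcases List.suffix_or_suffix_of_suffix (hωsu.trans hc) hω'su' with h | h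
          · exact Or.inr h
          · exact Or.inl h
      -- tail budgets
      have hihfull := ih bs' hlen' hbsE hbs'E ω ω'
        ((hag t bs).length - ω.length) ((hag t bs').length - ω'.length)
        hω hω' hcompt (by omega) (by omega) (by omega) (by omega)
      by_cases hbb : b = b'
      · subst hbb
        have hgoal : (((b :: bs).zip (b :: bs')).filter
            (fun p => decide (p.1 ≠ p.2))).length
            = ((bs.zip bs').filter (fun p => decide (p.1 ≠ p.2))).length := by
          simp [List.zip_cons_cons, List.filter_cons]
        rw [hgoal]
        refine le_trans hihfull (max_le_max ?_ ?_) <;> omega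
      · have hgoal : (((b :: bs).zip (b' :: bs')).filter
            (fun p => decide (p.1 ≠ p.2))).length
            = ((bs.zip bs').filter (fun p => decide (p.1 ≠ p.2))).length + 1 := by
          simp [List.zip_cons_cons, List.filter_cons, hbb]
        rw [hgoal]
        rcases hcomp with hc | hc
        · -- u' is a suffix of u, so S ≤ S'
          have hSS' : S ≤ S' := by
            have := hc.length_le
            omega
          -- e' ≥ 1
          have he' : α'.length < E + (t + t) := by
            by_contra hcon
            have hα'full : α' = b' ++ marker t := by
              refine hα'.eq_of_length ?_
              simp [hb'l, marker_length]
              omega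
            have := key t E ht b b' bs u u' ω' S' hbl hb'l hc hsub
              (by rw [hu', hα'full]) (by rw [hn]; exact hS') hS't
            exact hbb this.symm
          rcases eq_or_lt_of_le hSS' with heq | hlt
          · -- also e ≥ 1
            have he : α.length < E + (t + t) := by
              by_contra hcon
              have hαfull : α = b ++ marker t := by
                refine hα.eq_of_length ?_
                simp [hbl, marker_length]
                omega
              have huu' : u = u' := by
                have h1 : u'.length = u.length := by omega
                exact (hc.sublist.eq_of_length h1).symm
              have := key t E ht b' b bs' u' u ω S hb'l hbl
                (by rw [huu']) hsub' (by rw [hu, hαfull]) (by rw [← hn]; exact hS) hSt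
              exact hbb this
            rcases max_choice ((hag t bs).length - ω.length)
                ((hag t bs').length - ω'.length) with hm | hm <;>
              rw [hm] at hihfull <;>
              rcases max_choice S S' with hm2 | hm2 <;> rw [hm2] <;> omega
          · rcases max_choice ((hag t bs).length - ω.length)
                ((hag t bs').length - ω'.length) with hm | hm <;>
              rw [hm] at hihfull <;>
              rcases max_choice S S' with hm2 | hm2 <;> rw [hm2] <;> omega
        · -- u is a suffix of u', so S' ≤ S
          have hS'S : S' ≤ S := by
            have := hc.length_le
            omega
          have he : α.length < E + (t + t) := by
            by_contra hcon
            have hαfull : α = b ++ marker t := by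
              refine hα.eq_of_length ?_
              simp [hbl, marker_length]
              omega
            have := key t E ht b' b bs' u' u ω S hb'l hbl hc hsub'
              (by rw [hu, hαfull]) (by rw [← hn]; exact hS) hSt
            exact hbb this
          rcases eq_or_lt_of_le hS'S with heq | hlt
          · have he' : α'.length < E + (t + t) := by
              by_contra hcon
              have hα'full : α' = b' ++ marker t := by
                refine hα'.eq_of_length ?_
                simp [hb'l, marker_length]
                omega
              have huu' : u' = u := by
                have h1 : u.length = u'.length := by omega
                exact (hc.sublist.eq_of_length h1).symm
              have := key t E ht b b' bs u u' ω' S' hbl hb'l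
                (by rw [huu']) hsub (by rw [hu', hα'full]) (by rw [hn]; exact hS') hS't
              exact hbb this.symm
            rcases max_choice ((hag t bs).length - ω.length)
                ((hag t bs').length - ω'.length) with hm | hm <;>
              rw [hm] at hihfull <;>
              rcases max_choice S S' with hm2 | hm2 <;> rw [hm2] <;> omega
          · rcases max_choice ((hag t bs).length - ω.length)
                ((hag t bs').length - ω'.length) with hm | hm <;>
              rw [hm] at hihfull <;>
              rcases max_choice S S' with hm2 | hm2 <;> rw [hm2] <;> omega

lemma del_sublist {α : Type*} (x : List α) (J : Finset ℕ) : (del x J).Sublist x := by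
  unfold del
  have h1 := (List.filter_sublist (p := fun p : ℕ × α => decide (p.1 ∉ J)) (l := (x.zipIdx 1).map Prod.swap))
  have h2 := h1.map Prod.snd
  have h3 : ((x.zipIdx 1).map Prod.swap).map Prod.snd = x := by
    simp [List.map_map, Function.comp_def, List.zipIdx_map_fst]
  rwa [h3] at h2

lemma del_len_aux {α : Type*} [DecidableEq ℕ] :
    ∀ (x : List α) (n : ℕ) (J : Finset ℕ),
      x.length ≤ (((x.zipIdx n).map Prod.swap).filter (fun p => decide (p.1 ∉ J))).length
        + (J.filter (fun j => n ≤ j)).card := by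
  intro x
  induction x with
  | nil => intro n J; simp
  | cons a x ihx =>
    intro n J
    rw [List.zipIdx_cons, List.map_cons, Prod.swap_prod_mk, List.filter_cons]
    by_cases hn : n ∈ J
    · have hd : (decide ((n, a).1 ∉ J)) = false := by simp [hn]
      rw [hd]
      have hih := ihx (n + 1) J
      have hsub : insert n (J.filter (fun j => n + 1 ≤ j)) ⊆ J.filter (fun j => n ≤ j) := by
        intro j hj
        simp only [Finset.mem_insert, Finset.mem_filter] at hj ⊢
        rcases hj with h | ⟨h1, h2⟩
        · exact ⟨by rwa [h], by omega⟩
        · exact ⟨h1, by omega⟩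
      have hcard := Finset.card_le_card hsub
      rw [Finset.card_insert_of_notMem (by simp)] at hcard
      simp only [Bool.false_eq_true, if_false, List.length_cons]
      omega
    · have hd : (decide ((n, a).1 ∉ J)) = true := by simp [hn]
      rw [hd]
      have hih := ihx (n + 1) J
      have hcard : (J.filter (fun j => n + 1 ≤ j)).card ≤ (J.filter (fun j => n ≤ j)).card := by
        refine Finset.card_le_card ?_
        intro j hj
        simp only [Finset.mem_filter] at hj ⊢
        exact ⟨hj.1, by omega⟩
      simp only [if_true, List.length_cons]
      omega

lemma del_len {α : Type*} (x : List α) (J : Finset ℕ) :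
    x.length ≤ (del x J).length + J.card := by
  have h1 := del_len_aux x 1 J
  have h2 : (J.filter (fun j => 1 ≤ j)).card ≤ J.card :=
    Finset.card_le_card (Finset.filter_subset _ _)
  unfold del
  rw [List.length_map]
  omega

lemma del_mono {α : Type*} (y : List α) {K K' : Finset ℕ} (h : K ⊆ K') :
    (del y K').Sublist (del y K) := by
  unfold del
  refine List.Sublist.map Prod.snd ?_
  refine List.monotone_filter_right _ ?_
  intro a ha
  simp only [decide_eq_true_eq] at ha ⊢
  exact fun hmem => ha (h hmem)

end Stmt16Aux

open Stmt16Aux in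
theorem stmt16 (N E t : ℕ) (C : Set (List (List Bool)))
    (hlen : ∀ bs ∈ C, bs.length = N ∧ ∀ cb ∈ bs, cb.length = E)
    -- `C` corrects `e` block-erasures and `m` block-substitutions whenever
    -- `e + 2m ≤ t`; e.g. its minimum block-Hamming distance exceeds `t`:
    (hdist : ∀ bs ∈ C, ∀ bs' ∈ C, bs ≠ bs' →
      t < ((List.zip bs bs').filter (fun p => decide (p.1 ≠ p.2))).length) :
    ∀ bs ∈ C, ∀ bs' ∈ C, bs ≠ bs' →
      ∀ (td ti td' ti' : ℕ) (J K J' K' : Finset ℕ),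
        1 ≤ td → 1 ≤ ti → td + ti ≤ t →
        1 ≤ td' → 1 ≤ ti' → td' + ti' ≤ t →
        J.card = td → K.card = ti → J'.card = td' → K'.card = ti' →
        ∀ y : List Bool,
          (y.length = (del (hag t bs) J).length + K.card ∧
            del y K = del (hag t bs) J) →
          (y.length = (del (hag t bs') J').length + K'.card ∧
            del y K' = del (hag t bs') J') →
          False := by
  intro bs hbs bs' hbs' hne td ti td' ti' J K J' K' htd hti hsum htd' hti' hsum'
    hJ hK hJ' hK' y hy1 hy2
  obtain ⟨hy1l, hy1e⟩ := hy1
  obtain ⟨hy2l, hy2e⟩ := hy2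
  obtain ⟨hbslen, hbsE⟩ := hlen bs hbs
  obtain ⟨hbs'len, hbs'E⟩ := hlen bs' hbs'
  set w := del y (K ∪ K') with hw
  have hwK : w.Sublist (del y K) := del_mono y Finset.subset_union_left
  have hwK' : w.Sublist (del y K') := del_mono y Finset.subset_union_right
  have hwbs : w.Sublist (hag t bs) := by
    rw [hy1e] at hwK
    exact hwK.trans (del_sublist _ _)
  have hwbs' : w.Sublist (hag t bs') := by
    rw [hy2e] at hwK'
    exact hwK'.trans (del_sublist _ _)
  -- length accounting
  have h1 : y.length ≤ w.length + (K ∪ K').card := del_len y (K ∪ K')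
  have h2 : (K ∪ K').card ≤ K.card + K'.card := Finset.card_union_le _ _
  have h3 : (hag t bs).length ≤ (del (hag t bs) J).length + J.card := del_len _ _
  have h4 : (hag t bs').length ≤ (del (hag t bs') J').length + J'.card := del_len _ _
  have h5 : (del (hag t bs) J).length ≤ (hag t bs).length := (del_sublist _ _).length_le
  have h6 : (del (hag t bs') J').length ≤ (hag t bs').length := (del_sublist _ _).length_le
  have hneq : (hag t bs).length = (hag t bs').length := by
    rw [hag_length t E bs hbsE, hag_length t E bs' hbs'E, hbslen, hbs'len]
  have hwlen : w.length ≤ (hag t bs).length := hwbs.length_le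
  have ht1 : 1 ≤ t := by omega
  have hwt : w.length + t ≥ (hag t bs).length := by omega
  have hmain := main t E ht1 bs bs' (by omega) hbsE hbs'E w w
    ((hag t bs).length - w.length) ((hag t bs').length - w.length)
    hwbs hwbs' (Or.inl (List.suffix_refl w)) (by omega) (by omega) (by omega)
    (by omega)
  have hd := hdist bs hbs bs' hbs' hne
  rcases max_choice ((hag t bs).length - w.length)
      ((hag t bs').length - w.length) with hm | hm <;> rw [hm] at hmain <;> omega
end
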